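/- Let G ≤ K be finite groups such that K is generated by G together with its center Z(K). Then every irreducible complex representation ρ of G extends to an irreducible representation ρ̂ of K, i.e. there exists an irreducible representation ρ̂ of K whose restriction to G equals ρ. -/

import Mathlib

noncomputable section

/-- A representation is irreducible if its only invariant subspaces are `⊥` and `⊤`. -/
def Representation.IsIrred {k G V : Type*} [CommRing k] [Group G] [AddCommGroup V]
    [Module k V] (ρ : Representation k G V) : Prop :=
  ∀ p : Submodule k V, (∀ g : G, ∀ v ∈ p, ρ g v ∈ p) → p = ⊥ ∨ p = ⊤

/-- `ℂˣ` is `ℕ`-rootable since `ℂ` is algebraically closed. -/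
noncomputable instance : RootableBy ℂˣ ℕ :=
  rootableByOfPowLeftSurj _ _ fun {n} hn u => by
    obtain ⟨z, hz⟩ := IsAlgClosed.exists_pow_nat_eq (k := ℂ) (u : ℂ) (Nat.pos_of_ne_zero hn)
    have hz0 : z ≠ 0 := by
      intro h
      rw [h, zero_pow hn] at hz
      exact u.ne_zero hz.symm
    exact ⟨Units.mk0 z hz0, Units.ext (by simpa using hz)⟩

noncomputable instance : RootableBy ℂˣ ℤ := Group.rootableByIntOfRootableByNat ℂˣ

noncomputable instance : DivisibleBy (Additive ℂˣ) ℤ where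
  div a n := Additive.ofMul (RootableBy.root a.toMul n)
  div_zero a := by
    simp only [RootableBy.root_zero]
    rfl
  div_cancel a hn := by
    show (_ : ℤ) • Additive.ofMul _ = a
    rw [← ofMul_zpow, RootableBy.root_cancel _ hn]
    rfl

/-- Uniqueness of the Schur scalar. -/
lemma algebraMap_end_injective {V : Type*} [AddCommGroup V] [Module ℂ V] [Nontrivial V] :
    Function.Injective (algebraMap ℂ (Module.End ℂ V)) := by
  intro a b h
  obtain ⟨v, hv⟩ := exists_ne (0 : V)
  have h2 : a • v = b • v := by
    have := congrArg (fun m : Module.End ℂ V => m v) h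
    simpa [Module.algebraMap_end_apply] using this
  have h3 : (a - b) • v = 0 := by rw [sub_smul, h2, sub_self]
  rcases smul_eq_zero.mp h3 with h4 | h4
  · exact sub_eq_zero.mp h4
  · exact absurd h4 hv

/-- Schur's lemma: an endomorphism commuting with an irreducible representation is scalar. -/
lemma aux_schur {G V : Type*} [Group G] [AddCommGroup V] [Module ℂ V]
    [FiniteDimensional ℂ V] [Nontrivial V]
    (ρ : Representation ℂ G V) (hρ : ρ.IsIrred) (f : Module.End ℂ V)
    (hf : ∀ g : G, f * ρ g = ρ g * f) : ∃ c : ℂ, f = algebraMap ℂ (Module.End ℂ V) c := by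
  obtain ⟨c, hc⟩ := Module.End.exists_eigenvalue f
  obtain ⟨v, hv⟩ := hc.exists_hasEigenvector
  set p := LinearMap.ker (f - algebraMap ℂ (Module.End ℂ V) c) with hp
  have hmem : ∀ w : V, w ∈ p ↔ f w = c • w := by
    intro w
    rw [hp, LinearMap.mem_ker, LinearMap.sub_apply, Module.algebraMap_end_apply, sub_eq_zero]
  have hinv : ∀ g : G, ∀ w ∈ p, ρ g w ∈ p := by
    intro g w hw
    rw [hmem] at hw ⊢
    have hcomm : f (ρ g w) = ρ g (f w) := by
      have := congrArg (fun m : Module.End ℂ V => m w) (hf g)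
      simpa [Module.End.mul_apply] using this
    rw [hcomm, hw, map_smul]
  have hpne : p ≠ ⊥ := by
    intro h
    have hvp : v ∈ p := (hmem v).mpr (hv.apply_eq_smul)
    rw [h, Submodule.mem_bot] at hvp
    exact hv.2 hvp
  have hptop : p = ⊤ := (hρ p hinv).resolve_left hpne
  refine ⟨c, ?_⟩
  ext w
  have hw : w ∈ p := hptop ▸ Submodule.mem_top
  rw [hmem] at hw
  simpa [Module.algebraMap_end_apply] using hw

theorem irreducible_extends_of_sup_center_eq_top (K : Type) [Group K] [Fintype K]
    (G : Subgroup K) (hK : G ⊔ Subgroup.center K = ⊤)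
    (V : Type) [AddCommGroup V] [Module ℂ V] [FiniteDimensional ℂ V]
    (ρ : Representation ℂ ↥G V) (hρ : ρ.IsIrred) :
    ∃ ρK : Representation ℂ K V, ρK.IsIrred ∧ ∀ g : ↥G, ρK (g : K) = ρ g := by
  classical
  by_cases hV : Subsingleton V
  · refine ⟨1, ?_, ?_⟩
    · intro p _
      left
      ext v
      simp only [Submodule.mem_bot]
      constructor
      · intro _; exact Subsingleton.elim v 0
      · rintro rfl; exact p.zero_mem
    · intro g
      ext v
      exact Subsingleton.elim _ _
  have : Nontrivial V := not_subsingleton_iff_nontrivial.mp hV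
  set Z := Subgroup.center K with hZ
  set D : Subgroup ↥Z := G.subgroupOf Z with hD
  have memG : ∀ t : ↥D, ((t : ↥Z) : K) ∈ G := fun t => Subgroup.mem_subgroupOf.mp t.2
  -- the Schur scalar on D
  have hsc : ∀ t : ↥D, ∃ c : ℂˣ,
      ρ ⟨((t : ↥Z) : K), memG t⟩ = algebraMap ℂ (Module.End ℂ V) (c : ℂ) := by
    intro t
    have hcomm : ∀ g : ↥G,
        ρ ⟨((t : ↥Z) : K), memG t⟩ * ρ g = ρ g * ρ ⟨((t : ↥Z) : K), memG t⟩ := by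
      intro g
      rw [← map_mul, ← map_mul]
      congr 1
      ext
      exact (Subgroup.mem_center_iff.mp (t : ↥Z).2 (g : K)).symm
    obtain ⟨c, hc⟩ := aux_schur ρ hρ (ρ ⟨((t : ↥Z) : K), memG t⟩) hcomm
    have hcne : c ≠ 0 := by
      intro h0
      have h1 : ρ ⟨((t : ↥Z) : K), memG t⟩ * ρ (⟨((t : ↥Z) : K), memG t⟩)⁻¹ = 1 := by
        rw [← map_mul, mul_inv_cancel, map_one]
      rw [hc, h0, map_zero, zero_mul] at h1
      obtain ⟨v, hv⟩ := exists_ne (0 : V)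
      have h2 := congrArg (fun m : Module.End ℂ V => m v) h1
      simp only [LinearMap.zero_apply, Module.End.one_apply] at h2
      first
      | exact hv h2.symm
      | exact h2
    exact ⟨Units.mk0 c hcne, by rwa [Units.val_mk0]⟩
  choose scl hscl using hsc
  have hmul : ∀ s t : ↥D, scl (s * t) = scl s * scl t := by
    intro s t
    apply Units.ext
    apply algebraMap_end_injective (V := V)
    rw [Units.val_mul, map_mul, ← hscl, ← hscl, ← hscl, ← map_mul]
    congr 1
  have hone : scl 1 = 1 := by
    apply Units.ext
    apply algebraMap_end_injective (V := V)
    rw [← hscl, Units.val_one, map_one]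
    have h1 : (⟨(((1 : ↥D) : ↥Z) : K), memG 1⟩ : ↥G) = 1 := rfl
    rw [h1, map_one]
  let lam : ↥D →* ℂˣ := ⟨⟨scl, hone⟩, hmul⟩
  -- extend lam from D to Z using divisibility of ℂˣ
  have hinj : Function.Injective (MonoidHom.toAdditive D.subtype) :=
    fun a b h => congrArg Additive.ofMul
      (Subgroup.subtype_injective D (congrArg Additive.toMul h))
  open scoped IsMulCommutative in
  obtain ⟨Ω, hΩ⟩ := Module.Baer.extension_property_addMonoidHom
    (Module.Baer.of_divisible (Additive ℂˣ))
    (MonoidHom.toAdditive D.subtype) hinj (MonoidHom.toAdditive lam)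
  set ω : ↥Z →* ℂˣ := MonoidHom.toAdditive.symm Ω with hω
  have hωlam : ∀ t : ↥D, ω (D.subtype t) = lam t := fun t => DFunLike.congr_fun hΩ t
  -- the two monoid homs
  let φ : ↥G × ↥Z →* K := MonoidHom.noncommCoprod G.subtype Z.subtype
    (fun g z => Subgroup.mem_center_iff.mp z.2 (g : K))
  let σ : ↥Z →* Module.End ℂ V :=
    ((algebraMap ℂ (Module.End ℂ V)).toMonoidHom).comp ((Units.coeHom ℂ).comp ω)
  let ψ : ↥G × ↥Z →* Module.End ℂ V := MonoidHom.noncommCoprod ρ σ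
    (fun g z => (Algebra.commutes ((ω z : ℂˣ) : ℂ) (ρ g)).symm)
  have hφ : ∀ x : ↥G × ↥Z, φ x = (x.1 : K) * (x.2 : K) := fun x => rfl
  have hψ : ∀ x : ↥G × ↥Z, ψ x = ρ x.1 * σ x.2 := fun x => rfl
  have hsurj : Function.Surjective φ := by
    rw [← MonoidHom.range_eq_top]
    rw [← top_le_iff, ← hK]
    refine sup_le ?_ ?_ <;> intro x hx
    · exact ⟨(⟨x, hx⟩, 1), by rw [hφ]; simp⟩
    · exact ⟨(1, ⟨x, hx⟩), by rw [hφ]; simp⟩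
  have hker : ∀ x : ↥G × ↥Z, φ x = 1 → ψ x = 1 := by
    rintro ⟨g, z⟩ h
    rw [hφ] at h
    have hzG : ((z : ↥Z) : K) ∈ G := by
      have h2 : ((z : ↥Z) : K) = (g : K)⁻¹ := eq_inv_of_mul_eq_one_right h
      rw [h2]
      exact inv_mem g.2
    set t : ↥D := ⟨z, Subgroup.mem_subgroupOf.mpr hzG⟩ with ht
    have hgt : g = (⟨(((t⁻¹ : ↥D) : ↥Z) : K), memG t⁻¹⟩ : ↥G) := by
      ext
      exact eq_inv_of_mul_eq_one_left h
    have hρg : ρ g = algebraMap ℂ (Module.End ℂ V) ((scl t⁻¹ : ℂˣ) : ℂ) := by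
      rw [hgt]; exact hscl t⁻¹
    have hσz : σ z = algebraMap ℂ (Module.End ℂ V) ((scl t : ℂˣ) : ℂ) := by
      have hz2 : D.subtype t = z := rfl
      have h3 := hωlam t
      rw [hz2] at h3
      show algebraMap ℂ (Module.End ℂ V) ((ω z : ℂˣ) : ℂ) = _
      rw [h3]
      rfl
    rw [hψ, hρg, hσz, ← map_mul, ← Units.val_mul]
    have h4 : scl t⁻¹ * scl t = 1 := by
      rw [← hmul, inv_mul_cancel, hone]
    rw [h4, Units.val_one, map_one]
  have key : ∀ x y : ↥G × ↥Z, φ x = φ y → ψ x = ψ y := by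
    intro x y h
    have h1 : ψ (x * y⁻¹) = 1 := hker _ (by rw [map_mul, map_inv, h, mul_inv_cancel])
    have h2 : ψ x * ψ y⁻¹ = 1 := by rw [← map_mul]; exact h1
    have h3 : ψ y⁻¹ * ψ y = 1 := by rw [← map_mul, inv_mul_cancel, map_one]
    calc ψ x = ψ x * (ψ y⁻¹ * ψ y) := by rw [h3, mul_one]
      _ = ψ x * ψ y⁻¹ * ψ y := by rw [mul_assoc]
      _ = ψ y := by rw [h2, one_mul]
  set s := Function.surjInv hsurj with hs'
  have hs : ∀ k : K, φ (s k) = k := fun k => Function.surjInv_eq hsurj k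
  let ρK : Representation ℂ K V :=
    { toFun := fun k => ψ (s k)
      map_one' := by
        show ψ (s 1) = 1
        rw [key (s 1) 1 (by rw [hs, map_one]), map_one]
      map_mul' := fun a b => by
        show ψ (s (a * b)) = ψ (s a) * ψ (s b)
        rw [key (s (a * b)) (s a * s b) (by rw [hs, map_mul, hs, hs]), map_mul] }
  have hres : ∀ g : ↥G, ρK (g : K) = ρ g := by
    intro g
    show ψ (s (g : K)) = ρ g
    rw [key (s (g : K)) (g, 1) (by rw [hs, hφ]; simp), hψ]
    simp only [map_one, mul_one]
  refine ⟨ρK, ?_, hres⟩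
  intro p hp
  apply hρ p
  intro g v hv
  have := hp (g : K) v hv
  rwa [hres] at this
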